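/- arXiv:0902.4397 — 10 statements merged into one kernel-verified Lean document; each statement's English description precedes it below -/
import Mathlib

section
/- Let γ, p: ℝ → ℝⁿ be differentiable curves, ω(t) a skew-symmetric matrix for each t, and suppose γ̇ = -ωγ, (γ,γ) = 1, (γ,p) = 0 for all t, and that k := γ∧p satisfies k̇ = [k,ω]. Then ṗ = -ωp. (That is, the Lagrange multiplier λ in ṗ = -ωp + λγ vanishes.) -/
open Matrix

noncomputable def wedge {n : ℕ} (v w : Fin n → ℝ) : Matrix (Fin n) (Fin n) ℝ :=
  vecMulVec v w - vecMulVec w v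

theorem stmt3 {n : ℕ} (γ p p' : ℝ → Fin n → ℝ)
    (ω : ℝ → Matrix (Fin n) (Fin n) ℝ)
    (hskew : ∀ t, (ω t)ᵀ = -ω t)
    (hγ : ∀ t i, HasDerivAt (fun s => γ s i) (-(ω t).mulVec (γ t) i) t)
    (hp : ∀ t i, HasDerivAt (fun s => p s i) (p' t i) t)
    (hγγ : ∀ t, γ t ⬝ᵥ γ t = 1)
    (hγp : ∀ t, γ t ⬝ᵥ p t = 0)
    (hk : ∀ t i j, HasDerivAt (fun s => wedge (γ s) (p s) i j)
      ((wedge (γ t) (p t) * ω t - ω t * wedge (γ t) (p t)) i j) t) :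
    ∀ t, p' t = -(ω t).mulVec (p t) := by
  intro t
  set g := γ t with hg
  set P := p t with hP
  set P' := p' t with hP'
  set W := ω t with hW
  have hvm : ∀ v : Fin n → ℝ, Matrix.vecMul v W = -(W.mulVec v) := by
    intro v
    rw [← Matrix.mulVec_transpose, hskew t, Matrix.neg_mulVec]
  -- entrywise derivative equality
  have key : ∀ i j, (-(W.mulVec g)) i * P j + g i * P' j
      - (P' i * g j + P i * (-(W.mulVec g)) j)
      = (wedge g P * W - W * wedge g P) i j := by
    intro i j
    have h1 : HasDerivAt (fun s => wedge (γ s) (p s) i j)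
        ((-(W.mulVec g)) i * P j + g i * P' j
          - (P' i * g j + P i * (-(W.mulVec g)) j)) t := by
      have := ((hγ t i).fun_mul (hp t j)).fun_sub ((hp t i).fun_mul (hγ t j))
      simpa [wedge, Matrix.sub_apply, Matrix.vecMulVec_apply, mul_comm] using this
    exact h1.unique (hk t i j)
  -- compute the commutator entrywise
  have hcomm : ∀ i j, (wedge g P * W - W * wedge g P) i j
      = (-(W.mulVec g)) i * P j - P i * (-(W.mulVec g)) j
        - g i * (W.mulVec P) j + (W.mulVec P) i * g j := by
    intro i j
    have h1 : (wedge g P * W) i j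
        = g i * (Matrix.vecMul P W) j - P i * (Matrix.vecMul g W) j := by
      simp [wedge, Matrix.mul_apply, Matrix.vecMulVec_apply, Matrix.vecMul,
        dotProduct, sub_mul, Finset.sum_sub_distrib, Finset.mul_sum, mul_assoc]
    have h2 : (W * wedge g P) i j
        = (W.mulVec g) i * P j - (W.mulVec P) i * g j := by
      simp [wedge, Matrix.mul_apply, Matrix.vecMulVec_apply, Matrix.mulVec,
        dotProduct, mul_sub, Finset.sum_sub_distrib, Finset.mul_sum, mul_assoc,
        mul_comm, mul_left_comm]
    rw [Matrix.sub_apply, h1, h2, hvm, hvm]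
    simp
    ring
  -- wedge of g and q vanishes: g i * q j = q i * g j for q = P' + W p
  set q : Fin n → ℝ := fun i => P' i + (W.mulVec P) i with hq
  have hwq : ∀ i j, g i * q j = q i * g j := by
    intro i j
    have := (key i j).trans (hcomm i j)
    simp only [hq]
    ring_nf
    ring_nf at this
    linarith
  -- g ⬝ q = 0
  have hgq : ∑ i, g i * q i = 0 := by
    have hsum : HasDerivAt (fun s => ∑ i, γ s i * p s i)
        (∑ i, ((-(W.mulVec g)) i * P i + g i * P' i)) t :=
      HasDerivAt.fun_sum fun i _ => (hγ t i).fun_mul (hp t i)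
    have hconst : HasDerivAt (fun s => ∑ i, γ s i * p s i) 0 t := by
      have he : (fun s => ∑ i, γ s i * p s i) = fun _ => (0:ℝ) := by
        funext s
        simpa [dotProduct] using hγp s
      rw [he]; exact hasDerivAt_const _ _
    have h0 := hsum.unique hconst
    have hgw : ∑ i, g i * (W.mulVec P) i = -∑ i, (W.mulVec g) i * P i := by
      have h : g ⬝ᵥ (W.mulVec P) = Matrix.vecMul g W ⬝ᵥ P := Matrix.dotProduct_mulVec g W P
      rw [hvm] at h
      simpa [dotProduct] using h
    have e1 : ∑ i, g i * q i = ∑ i, g i * P' i + ∑ i, g i * (W.mulVec P) i := by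
      simp [hq, mul_add, Finset.sum_add_distrib]
    have e2 : ∑ i, g i * P' i = ∑ i, (W.mulVec g) i * P i := by
      rw [Finset.sum_add_distrib] at h0
      have : ∑ i, (-(W.mulVec g)) i * P i = -∑ i, (W.mulVec g) i * P i := by
        simp
      rw [this] at h0
      linarith
    rw [e1, e2, hgw]
    ring
  -- conclude q = 0
  have hgg : ∑ i, g i * g i = 1 := by simpa [dotProduct] using hγγ t
  have hq0 : ∀ i, q i = 0 := by
    intro i
    calc q i = q i * ∑ j, g j * g j := by rw [hgg]; ring
      _ = ∑ j, (q i * g j) * g j := by rw [Finset.mul_sum]; exact Finset.sum_congr rfl fun j _ => by ring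
      _ = ∑ j, (g i * q j) * g j := Finset.sum_congr rfl fun j _ => by rw [← hwq]
      _ = g i * ∑ j, g j * q j := by rw [Finset.mul_sum]; exact Finset.sum_congr rfl fun j _ => by ring
      _ = 0 := by rw [hgq]; ring
  funext i
  have := hq0 i
  simp only [hq] at this
  simp only [Pi.neg_apply]
  linarith
end

section
/- Let E₁,…,Eₙ be the standard basis of ℝⁿ and let I be the linear operator on skew-symmetric matrices defined by I(Eᵢ∧Eⱼ) = (aᵢaⱼD/(D - aᵢaⱼ)) Eᵢ∧Eⱼ for i < j, where 0 < aᵢaⱼ < D. Then for all γ, ξ ∈ ℝⁿ, I⁻¹(γ∧ξ) = (A⁻¹γ)∧(A⁻¹ξ) - (1/D) γ∧ξ, where A = diag(a₁,…,aₙ). -/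
open Matrix

/-- The standard basis vector `Eᵢ` of `ℝⁿ`. -/
noncomputable def E {n : ℕ} (i : Fin n) : Fin n → ℝ := Pi.single i 1

lemma wedge_expand {n : ℕ} (v w : Fin n → ℝ) :
    wedge v w = ∑ i, ∑ j, (v i * w j) • wedge (E i) (E j) := by
  ext k l
  simp [wedge, vecMulVec, E, Matrix.sum_apply, Pi.single_apply, mul_ite, ite_mul,
    mul_sub, Finset.sum_sub_distrib]
  ring

theorem stmt5 {n : ℕ} (hn : 2 ≤ n) (a : Fin n → ℝ) (D : ℝ) (hD : 0 < D)
    (ha : ∀ i, 0 < a i) (haD : ∀ i j, a i * a j < D)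
    (Iop : Matrix (Fin n) (Fin n) ℝ →ₗ[ℝ] Matrix (Fin n) (Fin n) ℝ)
    (hI : ∀ i j : Fin n, i < j →
      Iop (wedge (E i) (E j)) = (a i * a j * D / (D - a i * a j)) • wedge (E i) (E j)) :
    ∀ γ ξ : Fin n → ℝ,
      Iop (wedge (fun i => (a i)⁻¹ * γ i) (fun i => (a i)⁻¹ * ξ i)
            - (1 / D) • wedge γ ξ) = wedge γ ξ := by
  intro γ ξ
  have hI' : ∀ i j : Fin n,
      Iop (wedge (E i) (E j)) = (a i * a j * D / (D - a i * a j)) • wedge (E i) (E j) := by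
    intro i j
    rcases lt_trichotomy i j with h | h | h
    · exact hI i j h
    · subst h; simp [wedge, sub_self]
    · have h1 : wedge (E i) (E j) = - wedge (E j) (E i) := by simp [wedge]
      rw [h1, map_neg, hI j i h, mul_comm (a j) (a i), smul_neg]
  have key : wedge (fun i => (a i)⁻¹ * γ i) (fun i => (a i)⁻¹ * ξ i) - (1/D) • wedge γ ξ
      = ∑ i : Fin n, ∑ j : Fin n,
          ((((a i)⁻¹ * γ i) * ((a j)⁻¹ * ξ j) - 1/D * (γ i * ξ j)) • wedge (E i) (E j)) := by
    rw [wedge_expand (fun i => (a i)⁻¹ * γ i), wedge_expand γ ξ, Finset.smul_sum,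
      ← Finset.sum_sub_distrib]
    refine Finset.sum_congr rfl fun i _ => ?_
    rw [Finset.smul_sum, ← Finset.sum_sub_distrib]
    refine Finset.sum_congr rfl fun j _ => ?_
    rw [smul_smul, ← sub_smul]
  have step : ∀ i j : Fin n,
      Iop ((((a i)⁻¹ * γ i) * ((a j)⁻¹ * ξ j) - 1/D * (γ i * ξ j)) • wedge (E i) (E j))
        = (γ i * ξ j) • wedge (E i) (E j) := by
    intro i j
    rw [_root_.map_smul, hI', smul_smul]
    congr 1
    have h1 : a i ≠ 0 := (ha i).ne'
    have h2 : a j ≠ 0 := (ha j).ne'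
    have h3 : D - a i * a j ≠ 0 := sub_ne_zero.2 (haD i j).ne'
    field_simp
  rw [key, map_sum]
  simp_rw [map_sum, step]
  rw [← wedge_expand]
end

section
/- Let A = diag(a₁,…,aₙ) with all aᵢ > 0, D > 0, and let γ, p ∈ ℝⁿ satisfy (γ,γ) = 1 and (γ,p) = 0. Define ξ = (1/(D(γ,A⁻¹γ))) (Ap - (p,Aγ)γ). Then (γ,ξ) = 0 and p = ξ - D·I⁻¹(γ∧ξ)γ, where I⁻¹(γ∧ξ) = (A⁻¹γ)∧(A⁻¹ξ) - (1/D) γ∧ξ. -/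
open Matrix

lemma wedge_mulVec {n : ℕ} (v w x : Fin n → ℝ) :
    (wedge v w).mulVec x = (w ⬝ᵥ x) • v - (v ⬝ᵥ x) • w := by
  funext i
  simp only [wedge, mulVec, dotProduct, Matrix.sub_apply, vecMulVec_apply,
    Pi.sub_apply, Pi.smul_apply, smul_eq_mul, sub_mul, Finset.sum_sub_distrib,
    Finset.sum_mul, Finset.mul_sum]
  congr 1 <;> (apply Finset.sum_congr rfl; intros; ring)

theorem stmt6 {n : ℕ} (hn : 2 ≤ n) (a : Fin n → ℝ) (ha : ∀ i, 0 < a i)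
    (D : ℝ) (hD : 0 < D) (γ p : Fin n → ℝ)
    (hγγ : γ ⬝ᵥ γ = 1) (hγp : γ ⬝ᵥ p = 0) :
    letI Ainv : (Fin n → ℝ) → (Fin n → ℝ) := fun v i => (a i)⁻¹ * v i
    letI ξ : Fin n → ℝ :=
      (1 / (D * (γ ⬝ᵥ Ainv γ))) • ((fun i => a i * p i) - (p ⬝ᵥ fun i => a i * γ i) • γ)
    γ ⬝ᵥ ξ = 0 ∧
    p = ξ - D • (wedge (Ainv γ) (Ainv ξ) - (1 / D) • wedge γ ξ).mulVec γ := by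
  set Ainv : (Fin n → ℝ) → (Fin n → ℝ) := fun v i => (a i)⁻¹ * v i with hAinvdef
  set ξ : Fin n → ℝ :=
      (1 / (D * (γ ⬝ᵥ Ainv γ))) • ((fun i => a i * p i) - (p ⬝ᵥ fun i => a i * γ i) • γ)
    with hξdef
  have haz : ∀ i, a i ≠ 0 := fun i => (ha i).ne'
  have hpγ : p ⬝ᵥ γ = 0 := by rw [dotProduct_comm]; exact hγp
  -- the scalars
  set g : ℝ := γ ⬝ᵥ Ainv γ with hgdef
  set s : ℝ := p ⬝ᵥ (fun i => a i * γ i) with hsdef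
  have hgeq : g = ∑ i, (a i)⁻¹ * (γ i)^2 := by
    rw [hgdef, hAinvdef]
    apply Finset.sum_congr rfl; intros; ring
  have hex : ∃ i, γ i ≠ 0 := by
    by_contra h
    push_neg at h
    simp [dotProduct, h] at hγγ
  have hg : 0 < g := by
    rw [hgeq]
    obtain ⟨i, hi⟩ := hex
    apply Finset.sum_pos' (fun j _ => mul_nonneg (inv_nonneg.mpr (ha j).le) (sq_nonneg _))
    exact ⟨i, Finset.mem_univ i, mul_pos (inv_pos.mpr (ha i))
      (lt_of_le_of_ne (sq_nonneg _) (Ne.symm (pow_ne_zero 2 hi)))⟩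
  have hξ : ∀ i, ξ i = (1/(D*g)) * (a i * p i - s * γ i) := by
    intro i
    show (1 / (D * g)) * ((a i * p i) - s * γ i) = _
    rfl
  have h1 : γ ⬝ᵥ (fun i => a i * p i) = s := by
    rw [hsdef]
    apply Finset.sum_congr rfl
    intros; ring
  -- first part
  have hγξ : γ ⬝ᵥ ξ = 0 := by
    show γ ⬝ᵥ ((1 / (D * g)) • ((fun i => a i * p i) - s • γ)) = 0
    rw [dotProduct_smul, dotProduct_sub, dotProduct_smul, hγγ, h1]
    simp
  have hξγ : ξ ⬝ᵥ γ = 0 := by rw [dotProduct_comm]; exact hγξ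
  have hAγγ : Ainv γ ⬝ᵥ γ = g := by rw [dotProduct_comm]
  -- A⁻¹ξ as a vector
  have hAξ : Ainv ξ = (1/(D*g)) • (p - s • Ainv γ) := by
    funext i
    show (a i)⁻¹ * ξ i = (1/(D*g)) * (p i - s * ((a i)⁻¹ * γ i))
    rw [hξ i]
    field_simp [haz i, hD.ne', hg.ne']
  have hAξγ : Ainv ξ ⬝ᵥ γ = -s / D := by
    rw [hAξ, smul_dotProduct, sub_dotProduct, smul_dotProduct, hpγ, hAγγ,
      smul_eq_mul, smul_eq_mul, zero_sub]
    field_simp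
  refine ⟨hγξ, ?_⟩
  rw [Matrix.sub_mulVec, Matrix.smul_mulVec, wedge_mulVec, wedge_mulVec,
    hAξγ, hξγ, hγγ, hAγγ]
  funext i
  simp only [Pi.sub_apply, Pi.smul_apply, smul_eq_mul, one_smul, zero_smul,
    zero_sub, Pi.neg_apply]
  have hA : Ainv γ i = (a i)⁻¹ * γ i := rfl
  have hA2 : Ainv ξ i = (1/(D*g)) * (p i - s * ((a i)⁻¹ * γ i)) := by rw [hAξ]; rfl
  rw [hξ i, hA, hA2]
  field_simp [haz i, hD.ne', hg.ne']
  ring_nf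
end

section
/- With A = diag(a₁,…,aₙ), aᵢ > 0, D > 0, γ, p ∈ ℝⁿ with (γ,γ)=1, (γ,p)=0, and ξ = (Ap - (p,Aγ)γ)/(D(γ,A⁻¹γ)), the skew-symmetric matrix ω := I⁻¹(γ∧ξ) = (A⁻¹γ)∧(A⁻¹ξ) - (1/D)γ∧ξ equals ω = (1/(D(γ,A⁻¹γ))) ( (A⁻¹γ)∧p - (1/D) γ∧(Ap) ). -/
open Matrix

theorem stmt7 {n : ℕ} (hn : 2 ≤ n) (a : Fin n → ℝ) (ha : ∀ i, 0 < a i)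
    (D : ℝ) (hD : 0 < D) (γ p : Fin n → ℝ)
    (hγγ : γ ⬝ᵥ γ = 1) (hγp : γ ⬝ᵥ p = 0) :
    letI Ainv : (Fin n → ℝ) → (Fin n → ℝ) := fun v i => (a i)⁻¹ * v i
    letI ξ : Fin n → ℝ :=
      (1 / (D * (γ ⬝ᵥ Ainv γ))) • ((fun i => a i * p i) - (p ⬝ᵥ fun i => a i * γ i) • γ)
    wedge (Ainv γ) (Ainv ξ) - (1 / D) • wedge γ ξ =
      (1 / (D * (γ ⬝ᵥ Ainv γ))) •
        (wedge (Ainv γ) p - (1 / D) • wedge γ (fun i => a i * p i)) := by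
  ext i j
  have hai : (a i)⁻¹ * a i = 1 := inv_mul_cancel₀ (ha i).ne'
  have haj : (a j)⁻¹ * a j = 1 := inv_mul_cancel₀ (ha j).ne'
  simp only [wedge, Matrix.sub_apply, Matrix.smul_apply, vecMulVec_apply, Pi.smul_apply,
    Pi.sub_apply, smul_eq_mul]
  linear_combination (1 / (D * (γ ⬝ᵥ fun i => (a i)⁻¹ * γ i))) *
      ((a i)⁻¹ * γ i * p j * haj - (a j)⁻¹ * γ j * p i * hai)
end

section
/- Let A = diag(a₁,…,aₙ), aᵢ > 0, D > 0 and consider the vector field on {(γ,p) ∈ ℝ²ⁿ : γ ≠ 0} given by γ̇ = (1/D)p - ((p,γ)/(D(γ,A⁻¹γ)))A⁻¹γ + ((γ,Ap)/(D²(γ,A⁻¹γ)))γ - ((γ,γ)/(D²(γ,A⁻¹γ)))Ap, ṗ = ((p,A⁻¹γ)/(D(γ,A⁻¹γ)))p - ((p,p)/(D(γ,A⁻¹γ)))A⁻¹γ + ((p,Ap)/(D²(γ,A⁻¹γ)))γ - ((p,γ)/(D²(γ,A⁻¹γ)))Ap. Then the functions (γ,γ) and (γ,p) are first integrals of this vector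 field (their derivatives along the flow vanish at every point). -/
open Matrix

/-- The γ-component of the reduced Chaplygin sphere vector field. -/
noncomputable def Xg {n : ℕ} (a : Fin n → ℝ) (D : ℝ)
    (z : (Fin n → ℝ) × (Fin n → ℝ)) : Fin n → ℝ :=
  let γ := z.1
  let p := z.2
  let Ainvγ : Fin n → ℝ := fun i => (a i)⁻¹ * γ i
  let Ap : Fin n → ℝ := fun i => a i * p i
  let s := γ ⬝ᵥ Ainvγ
  (1 / D) • p - ((p ⬝ᵥ γ) / (D * s)) • Ainvγ
    + ((γ ⬝ᵥ Ap) / (D ^ 2 * s)) • γ - ((γ ⬝ᵥ γ) / (D ^ 2 * s)) • Ap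

/-- The p-component of the reduced Chaplygin sphere vector field. -/
noncomputable def Xp {n : ℕ} (a : Fin n → ℝ) (D : ℝ)
    (z : (Fin n → ℝ) × (Fin n → ℝ)) : Fin n → ℝ :=
  let γ := z.1
  let p := z.2
  let Ainvγ : Fin n → ℝ := fun i => (a i)⁻¹ * γ i
  let Ap : Fin n → ℝ := fun i => a i * p i
  let s := γ ⬝ᵥ Ainvγ
  ((p ⬝ᵥ Ainvγ) / (D * s)) • p - ((p ⬝ᵥ p) / (D * s)) • Ainvγ
    + ((p ⬝ᵥ Ap) / (D ^ 2 * s)) • γ - ((p ⬝ᵥ γ) / (D ^ 2 * s)) • Ap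

private lemma key1 (D s t v q : ℝ) (hD : D ≠ 0) (hs : s ≠ 0) :
    1 / D * t - t / (D * s) * s + v / (D ^ 2 * s) * q - q / (D ^ 2 * s) * v = 0 := by
  field_simp
  ring

private lemma key2 (D s u v w t q r : ℝ) (hD : D ≠ 0) (hs : s ≠ 0) :
    ((1 / D * r - t / (D * s) * u) + v / (D ^ 2 * s) * t - q / (D ^ 2 * s) * w)
      + ((u / (D * s) * t - r / (D * s) * s) + w / (D ^ 2 * s) * q
        - t / (D ^ 2 * s) * v) = 0 := by
  field_simp
  ring

theorem stmt8 {n : ℕ} (hn : 2 ≤ n) (a : Fin n → ℝ) (ha : ∀ i, 0 < a i)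
    (D : ℝ) (hD : 0 < D) (z : (Fin n → ℝ) × (Fin n → ℝ)) (hz : z.1 ≠ 0) :
    z.1 ⬝ᵥ Xg a D z = 0 ∧ Xg a D z ⬝ᵥ z.2 + z.1 ⬝ᵥ Xp a D z = 0 := by
  set γ := z.1 with hγdef
  set p := z.2 with hpdef
  have hs : 0 < γ ⬝ᵥ (fun i => (a i)⁻¹ * γ i) := by
    have h1 : ∀ i, 0 ≤ γ i * ((a i)⁻¹ * γ i) := by
      intro i
      have h4 : 0 ≤ (a i)⁻¹ := (inv_pos.2 (ha i)).le
      nlinarith [sq_nonneg (γ i)]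
    obtain ⟨j, hj⟩ := Function.ne_iff.1 hz
    have h2 : 0 < γ j * ((a j)⁻¹ * γ j) := by
      have h3 : 0 < γ j * γ j := mul_self_pos.2 hj
      have h4 : 0 < (a j)⁻¹ := inv_pos.2 (ha j)
      nlinarith
    exact Finset.sum_pos' (fun i _ => h1 i) ⟨j, Finset.mem_univ j, h2⟩
  have hsne : γ ⬝ᵥ (fun i => (a i)⁻¹ * γ i) ≠ 0 := ne_of_gt hs
  have hDne : D ≠ 0 := ne_of_gt hD
  have hc1 : (fun i => (a i)⁻¹ * γ i) ⬝ᵥ p = p ⬝ᵥ (fun i => (a i)⁻¹ * γ i) :=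
    dotProduct_comm _ _
  have hc2 : (fun i => a i * p i) ⬝ᵥ p = p ⬝ᵥ (fun i => a i * p i) :=
    dotProduct_comm _ _
  have hc3 : γ ⬝ᵥ p = p ⬝ᵥ γ := dotProduct_comm _ _
  constructor
  · simp only [Xg, ← hγdef, ← hpdef, dotProduct_add, dotProduct_sub,
      dotProduct_smul, smul_eq_mul, hc3]
    exact key1 D _ _ _ _ hDne hsne
  · simp only [Xg, Xp, ← hγdef, ← hpdef, dotProduct_add, dotProduct_sub,
      dotProduct_smul, add_dotProduct, sub_dotProduct, smul_dotProduct,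
      smul_eq_mul, hc1, hc2, hc3]
    exact key2 D _ _ _ _ _ _ _ hDne hsne
end

section
/- At points of the constraint set {(γ,p) : (γ,γ) = 1, (γ,p) = 0}, the divergence of the reduced Chaplygin vector field X (given by γ̇ = (1/D)p - ((p,γ)/(D(γ,A⁻¹γ)))A⁻¹γ + ((γ,Ap)/(D²(γ,A⁻¹γ)))γ - ((γ,γ)/(D²(γ,A⁻¹γ)))Ap and the corresponding ṗ equation) satisfies div(X) = (n-2)·(γ, A⁻¹γ̇)/(γ,A⁻¹γ), i.e. div(X) = -μ̇/μ for μ(γ) = (γ,A⁻¹γ)^{-(n-2)/2}. Equivalently, the Liouville equation Σᵢ γ̇ᵢ ∂μ/∂γᵢ + μ·div(X) = 0 holds on the constraint set. -/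
open Matrix BigOperators

/-- The divergence `∑ᵢ ∂γ̇ᵢ/∂γᵢ + ∂ṗᵢ/∂pᵢ` of the vector field `(Xg, Xp)`. -/
noncomputable def divX {n : ℕ} (a : Fin n → ℝ) (D : ℝ)
    (z : (Fin n → ℝ) × (Fin n → ℝ)) : ℝ :=
  ∑ i : Fin n,
    (fderiv ℝ (fun w => Xg a D w i) z (Pi.single i 1, 0)
      + fderiv ℝ (fun w => Xp a D w i) z (0, Pi.single i 1))


namespace ChaplyginAux

variable {n : ℕ}
abbrev EE (n : ℕ) := (Fin n → ℝ) × (Fin n → ℝ)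

noncomputable def c1 (j : Fin n) : EE n →L[ℝ] ℝ :=
  (ContinuousLinearMap.proj j).comp (ContinuousLinearMap.fst ℝ (Fin n → ℝ) (Fin n → ℝ))
noncomputable def c2 (j : Fin n) : EE n →L[ℝ] ℝ :=
  (ContinuousLinearMap.proj j).comp (ContinuousLinearMap.snd ℝ (Fin n → ℝ) (Fin n → ℝ))

lemma hc1 (j : Fin n) (z : EE n) : HasFDerivAt (fun w : EE n => w.1 j) (c1 j) z :=
  ContinuousLinearMap.hasFDerivAt (f := c1 j)
lemma hc2 (j : Fin n) (z : EE n) : HasFDerivAt (fun w : EE n => w.2 j) (c2 j) z :=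
  ContinuousLinearMap.hasFDerivAt (f := c2 j)

@[simp] lemma c1_apply (j : Fin n) (v : EE n) : c1 j v = v.1 j := rfl
@[simp] lemma c2_apply (j : Fin n) (v : EE n) : c2 j v = v.2 j := rfl

set_option maxHeartbeats 2000000 in
lemma keyg (a : Fin n → ℝ) (ha : ∀ i, 0 < a i) (D : ℝ) (hD : 0 < D) (γ p : Fin n → ℝ) (i : Fin n)
    (hs : (∑ j, γ j * ((a j)⁻¹ * γ j)) ≠ 0)
    (hne : D * (∑ j, γ j * ((a j)⁻¹ * γ j)) ≠ 0)
    (hne2 : D ^ 2 * (∑ j, γ j * ((a j)⁻¹ * γ j)) ≠ 0) :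
    fderiv ℝ (fun w : EE n => Xg a D w i) (γ, p) (Pi.single i 1, 0) =
       -((p i * γ i + (∑ j, p j * γ j)) * (a i)⁻¹) / (D * (∑ j, γ j * ((a j)⁻¹ * γ j)))
         + 2 * (∑ j, p j * γ j) * γ i * γ i * (a i)⁻¹ * (a i)⁻¹ / (D * (∑ j, γ j * ((a j)⁻¹ * γ j)) ^ 2)
         + (a i * p i * γ i + (∑ j, γ j * (a j * p j))) / (D ^ 2 * (∑ j, γ j * ((a j)⁻¹ * γ j)))
         - 2 * (∑ j, γ j * (a j * p j)) * γ i * γ i * (a i)⁻¹ / (D ^ 2 * (∑ j, γ j * ((a j)⁻¹ * γ j)) ^ 2)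
         - 2 * γ i * (a i) * p i / (D ^ 2 * (∑ j, γ j * ((a j)⁻¹ * γ j)))
         + 2 * (∑ j, γ j * γ j) * γ i * p i / (D ^ 2 * (∑ j, γ j * ((a j)⁻¹ * γ j)) ^ 2) := by
  set z : EE n := (γ, p) with hz
  have hS : HasFDerivAt (fun w : EE n => ∑ j, w.1 j * ((a j)⁻¹ * w.1 j))
      (∑ j, (γ j • ((a j)⁻¹ • c1 j) + ((a j)⁻¹ * γ j) • c1 j)) z :=
    HasFDerivAt.fun_sum fun j _ => (hc1 j z).mul ((hc1 j z).const_mul ((a j)⁻¹))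
  have hU : HasFDerivAt (fun w : EE n => ∑ j, w.2 j * w.1 j)
      (∑ j, (p j • c1 j + γ j • c2 j)) z :=
    HasFDerivAt.fun_sum fun j _ => (hc2 j z).mul (hc1 j z)
  have hW : HasFDerivAt (fun w : EE n => ∑ j, w.1 j * (a j * w.2 j))
      (∑ j, (γ j • (a j • c2 j) + (a j * p j) • c1 j)) z :=
    HasFDerivAt.fun_sum fun j _ => (hc1 j z).mul ((hc2 j z).const_mul (a j))
  have hG : HasFDerivAt (fun w : EE n => ∑ j, w.1 j * w.1 j)
      (∑ j, (γ j • c1 j + γ j • c1 j)) z :=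
    HasFDerivAt.fun_sum fun j _ => (hc1 j z).mul (hc1 j z)
  have hI1 := (hasFDerivAt_inv hne).comp z (hS.const_mul D)
  have hI2 := (hasFDerivAt_inv hne2).comp z (hS.const_mul (D^2))
  have hF := ((((hc2 i z).const_mul (1/D)).sub
      ((hU.mul hI1).mul ((hc1 i z).const_mul (a i)⁻¹))).add
      ((hW.mul hI2).mul (hc1 i z))).sub
      ((hG.mul hI2).mul ((hc2 i z).const_mul (a i)))
  have hF' : HasFDerivAt (fun w : EE n => Xg a D w i) _ z := hF
  rw [hF'.fderiv]
  have hai := (ha i).ne'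
  simp only [ContinuousLinearMap.coe_sub', ContinuousLinearMap.coe_add',
    ContinuousLinearMap.coe_smul', ContinuousLinearMap.coe_comp', ContinuousLinearMap.sum_apply,
    ContinuousLinearMap.smul_apply, ContinuousLinearMap.add_apply, Pi.sub_apply, Pi.add_apply,
    Pi.smul_apply, Function.comp_apply, ContinuousLinearMap.smulRight_apply,
    ContinuousLinearMap.one_apply, c1_apply, c2_apply, smul_eq_mul, Pi.single_apply,
    mul_ite, ite_mul, mul_zero, zero_mul, add_zero, zero_add, Finset.sum_ite_eq',
    Finset.mem_univ, if_true, Finset.sum_add_distrib, Pi.zero_apply,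
    Pi.mul_apply, ContinuousLinearMap.toSpanSingleton_apply, Finset.sum_const_zero]
  set s := ∑ j : Fin n, γ j * ((a j)⁻¹ * γ j) with hsd
  set u := ∑ j : Fin n, p j * γ j with hud
  set w1 := ∑ j : Fin n, γ j * (a j * p j) with hwd
  set g1 := ∑ j : Fin n, γ j * γ j with hgd
  field_simp
  ring

set_option maxHeartbeats 2000000 in
lemma keyp (a : Fin n → ℝ) (ha : ∀ i, 0 < a i) (D : ℝ) (hD : 0 < D) (γ p : Fin n → ℝ) (i : Fin n)
    (hs : (∑ j, γ j * ((a j)⁻¹ * γ j)) ≠ 0)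
    (hne : D * (∑ j, γ j * ((a j)⁻¹ * γ j)) ≠ 0)
    (hne2 : D ^ 2 * (∑ j, γ j * ((a j)⁻¹ * γ j)) ≠ 0) :
    fderiv ℝ (fun w : EE n => Xp a D w i) (γ, p) (0, Pi.single i 1) =
       ((a i)⁻¹ * γ i * p i + (∑ j, p j * ((a j)⁻¹ * γ j))) / (D * (∑ j, γ j * ((a j)⁻¹ * γ j)))
         - 2 * p i * γ i * (a i)⁻¹ / (D * (∑ j, γ j * ((a j)⁻¹ * γ j)))
         + 2 * a i * p i * γ i / (D ^ 2 * (∑ j, γ j * ((a j)⁻¹ * γ j)))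
         - (γ i * a i * p i + (∑ j, p j * γ j) * a i) / (D ^ 2 * (∑ j, γ j * ((a j)⁻¹ * γ j))) := by
  set z : EE n := (γ, p) with hz
  have hS : HasFDerivAt (fun w : EE n => ∑ j, w.1 j * ((a j)⁻¹ * w.1 j))
      (∑ j, (γ j • ((a j)⁻¹ • c1 j) + ((a j)⁻¹ * γ j) • c1 j)) z :=
    HasFDerivAt.fun_sum fun j _ => (hc1 j z).mul ((hc1 j z).const_mul ((a j)⁻¹))
  have hU : HasFDerivAt (fun w : EE n => ∑ j, w.2 j * w.1 j)
      (∑ j, (p j • c1 j + γ j • c2 j)) z :=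
    HasFDerivAt.fun_sum fun j _ => (hc2 j z).mul (hc1 j z)
  have hR : HasFDerivAt (fun w : EE n => ∑ j, w.2 j * ((a j)⁻¹ * w.1 j))
      (∑ j, (p j • ((a j)⁻¹ • c1 j) + ((a j)⁻¹ * γ j) • c2 j)) z :=
    HasFDerivAt.fun_sum fun j _ => (hc2 j z).mul ((hc1 j z).const_mul ((a j)⁻¹))
  have hQ : HasFDerivAt (fun w : EE n => ∑ j, w.2 j * w.2 j)
      (∑ j, (p j • c2 j + p j • c2 j)) z :=
    HasFDerivAt.fun_sum fun j _ => (hc2 j z).mul (hc2 j z)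
  have hT : HasFDerivAt (fun w : EE n => ∑ j, w.2 j * (a j * w.2 j))
      (∑ j, (p j • (a j • c2 j) + (a j * p j) • c2 j)) z :=
    HasFDerivAt.fun_sum fun j _ => (hc2 j z).mul ((hc2 j z).const_mul (a j))
  have hI1 := (hasFDerivAt_inv hne).comp z (hS.const_mul D)
  have hI2 := (hasFDerivAt_inv hne2).comp z (hS.const_mul (D^2))
  have hF := ((((hR.mul hI1).mul (hc2 i z)).sub
      ((hQ.mul hI1).mul ((hc1 i z).const_mul (a i)⁻¹))).add
      ((hT.mul hI2).mul (hc1 i z))).sub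
      ((hU.mul hI2).mul ((hc2 i z).const_mul (a i)))
  have hF' : HasFDerivAt (fun w : EE n => Xp a D w i) _ z := hF
  rw [hF'.fderiv]
  have hai := (ha i).ne'
  simp only [ContinuousLinearMap.coe_sub', ContinuousLinearMap.coe_add',
    ContinuousLinearMap.coe_smul', ContinuousLinearMap.coe_comp', ContinuousLinearMap.sum_apply,
    ContinuousLinearMap.smul_apply, ContinuousLinearMap.add_apply, Pi.sub_apply, Pi.add_apply,
    Pi.smul_apply, Function.comp_apply, ContinuousLinearMap.smulRight_apply,
    ContinuousLinearMap.one_apply, c1_apply, c2_apply, smul_eq_mul, Pi.single_apply,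
    mul_ite, ite_mul, mul_zero, zero_mul, add_zero, zero_add, Finset.sum_ite_eq',
    Finset.mem_univ, if_true, Finset.sum_add_distrib, Pi.zero_apply,
    Pi.mul_apply, ContinuousLinearMap.toSpanSingleton_apply, Finset.sum_const_zero]
  set s := ∑ j : Fin n, γ j * ((a j)⁻¹ * γ j) with hsd
  set u := ∑ j : Fin n, p j * γ j with hud
  set r := ∑ j : Fin n, p j * ((a j)⁻¹ * γ j) with hrd
  field_simp
  ring

end ChaplyginAux

open ChaplyginAux in
set_option maxHeartbeats 2000000 in
theorem stmt9 {n : ℕ} (hn : 2 ≤ n) (a : Fin n → ℝ) (ha : ∀ i, 0 < a i)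
    (D : ℝ) (hD : 0 < D) (γ p : Fin n → ℝ)
    (hγγ : γ ⬝ᵥ γ = 1) (hγp : γ ⬝ᵥ p = 0) :
    divX a D (γ, p) =
      (n - 2 : ℝ) * (γ ⬝ᵥ fun i => (a i)⁻¹ * Xg a D (γ, p) i) /
        (γ ⬝ᵥ fun i => (a i)⁻¹ * γ i) := by
  classical
  have hai : ∀ i, (a i : ℝ) ≠ 0 := fun i => (ha i).ne'
  have hgg : (∑ j, γ j * γ j) = 1 := by simpa [dotProduct] using hγγ
  have hgp0 : (∑ j, γ j * p j) = 0 := by simpa [dotProduct] using hγp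
  have hu : (∑ j, p j * γ j) = 0 := by
    rw [← hgp0]; exact Finset.sum_congr rfl fun j _ => mul_comm _ _
  have hs0 : 0 < ∑ j, γ j * ((a j)⁻¹ * γ j) := by
    obtain ⟨j0, hj0⟩ : ∃ j, γ j ≠ 0 := by
      by_contra h
      push_neg at h
      have h0 : (∑ j, γ j * γ j) = 0 := Finset.sum_eq_zero fun j _ => by rw [h j]; ring
      rw [h0] at hgg
      norm_num at hgg
    refine Finset.sum_pos' (fun j _ => ?_) ⟨j0, Finset.mem_univ _, ?_⟩
    · have h1 : γ j * ((a j)⁻¹ * γ j) = (a j)⁻¹ * γ j ^ 2 := by ring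
      rw [h1]
      exact mul_nonneg (inv_nonneg.2 (ha j).le) (sq_nonneg _)
    · have h1 : γ j0 * ((a j0)⁻¹ * γ j0) = (a j0)⁻¹ * γ j0 ^ 2 := by ring
      rw [h1]
      exact mul_pos (inv_pos.2 (ha j0)) (pow_two_pos_of_ne_zero hj0)
  have hs : (∑ j, γ j * ((a j)⁻¹ * γ j)) ≠ 0 := hs0.ne'
  have hne : D * (∑ j, γ j * ((a j)⁻¹ * γ j)) ≠ 0 := mul_ne_zero hD.ne' hs
  have hne2 : D ^ 2 * (∑ j, γ j * ((a j)⁻¹ * γ j)) ≠ 0 :=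
    mul_ne_zero (pow_ne_zero 2 hD.ne') hs
  -- the inner product (γ, A⁻¹ γ̇)
  have hXgi : ∀ i, γ i * ((a i)⁻¹ * Xg a D (γ, p) i)
      = (1/D) * (p i * ((a i)⁻¹ * γ i))
        + ((∑ j, γ j * (a j * p j)) / (D^2 * ∑ j, γ j * ((a j)⁻¹ * γ j))) * (γ i * ((a i)⁻¹ * γ i))
        + (-(1 / (D^2 * ∑ j, γ j * ((a j)⁻¹ * γ j)))) * (γ i * p i) := by
    intro i
    have h1 : Xg a D (γ, p) i = (1/D) * p i
        - ((∑ j, p j * γ j) / (D * ∑ j, γ j * ((a j)⁻¹ * γ j))) * ((a i)⁻¹ * γ i)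
        + ((∑ j, γ j * (a j * p j)) / (D^2 * ∑ j, γ j * ((a j)⁻¹ * γ j))) * γ i
        - ((∑ j, γ j * γ j) / (D^2 * ∑ j, γ j * ((a j)⁻¹ * γ j))) * (a i * p i) := rfl
    rw [h1, hu, hgg]
    set S := ∑ j, γ j * ((a j)⁻¹ * γ j) with hSd
    set R := ∑ j, p j * ((a j)⁻¹ * γ j) with hRd
    set W := ∑ j, γ j * (a j * p j) with hWd
    field_simp [hD.ne', hs, hai i]
    ring
  have hinner : (∑ i, γ i * ((a i)⁻¹ * Xg a D (γ, p) i))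
      = (∑ j, p j * ((a j)⁻¹ * γ j)) / D + (∑ j, γ j * (a j * p j)) / D^2 := by
    rw [Finset.sum_congr rfl fun i _ => hXgi i, Finset.sum_add_distrib, Finset.sum_add_distrib,
      ← Finset.mul_sum, ← Finset.mul_sum, ← Finset.mul_sum, hgp0]
    set S := ∑ j, γ j * ((a j)⁻¹ * γ j) with hSd
    set R := ∑ j, p j * ((a j)⁻¹ * γ j) with hRd
    set W := ∑ j, γ j * (a j * p j) with hWd
    field_simp [hD.ne', hs]
    ring
  have hterm : ∀ i, fderiv ℝ (fun w : (Fin n → ℝ) × (Fin n → ℝ) => Xg a D w i) (γ, p) (Pi.single i 1, 0)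
        + fderiv ℝ (fun w : (Fin n → ℝ) × (Fin n → ℝ) => Xp a D w i) (γ, p) (0, Pi.single i 1)
      = (-2/(D * ∑ j, γ j * ((a j)⁻¹ * γ j))) * (p i * ((a i)⁻¹ * γ i))
        + (-2 * (∑ j, γ j * (a j * p j)) / (D^2 * (∑ j, γ j * ((a j)⁻¹ * γ j))^2)) * (γ i * ((a i)⁻¹ * γ i))
        + (2/(D^2 * (∑ j, γ j * ((a j)⁻¹ * γ j))^2)) * (γ i * p i)
        + ((∑ j, p j * ((a j)⁻¹ * γ j)) / (D * ∑ j, γ j * ((a j)⁻¹ * γ j))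
            + (∑ j, γ j * (a j * p j)) / (D^2 * ∑ j, γ j * ((a j)⁻¹ * γ j))) := by
    intro i
    rw [keyg a ha D hD γ p i hs hne hne2, keyp a ha D hD γ p i hs hne hne2, hu, hgg]
    have := hai i
    set S := ∑ j, γ j * ((a j)⁻¹ * γ j) with hSd
    set R := ∑ j, p j * ((a j)⁻¹ * γ j) with hRd
    set W := ∑ j, γ j * (a j * p j) with hWd
    field_simp [hD.ne', hs, hai i]
    ring
  have hdiv : divX a D (γ, p)
      = ∑ i, (fderiv ℝ (fun w : (Fin n → ℝ) × (Fin n → ℝ) => Xg a D w i) (γ, p) (Pi.single i 1, 0)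
        + fderiv ℝ (fun w : (Fin n → ℝ) × (Fin n → ℝ) => Xp a D w i) (γ, p) (0, Pi.single i 1)) := rfl
  have hlhs : divX a D (γ, p)
      = (-2/(D * ∑ j, γ j * ((a j)⁻¹ * γ j))) * (∑ i, p i * ((a i)⁻¹ * γ i))
        + (-2 * (∑ j, γ j * (a j * p j)) / (D^2 * (∑ j, γ j * ((a j)⁻¹ * γ j))^2)) * (∑ i, γ i * ((a i)⁻¹ * γ i))
        + (n : ℝ) * ((∑ j, p j * ((a j)⁻¹ * γ j)) / (D * ∑ j, γ j * ((a j)⁻¹ * γ j))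
            + (∑ j, γ j * (a j * p j)) / (D^2 * ∑ j, γ j * ((a j)⁻¹ * γ j))) := by
    rw [hdiv, Finset.sum_congr rfl fun i _ => hterm i, Finset.sum_add_distrib,
      Finset.sum_add_distrib, Finset.sum_add_distrib,
      ← Finset.mul_sum, ← Finset.mul_sum, ← Finset.mul_sum, hgp0,
      Finset.sum_const, Finset.card_univ, Fintype.card_fin, nsmul_eq_mul]
    ring
  have hrhs1 : (γ ⬝ᵥ fun i => (a i)⁻¹ * Xg a D (γ, p) i)
      = ∑ i, γ i * ((a i)⁻¹ * Xg a D (γ, p) i) := rfl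
  have hrhs2 : (γ ⬝ᵥ fun i => (a i)⁻¹ * γ i) = ∑ i, γ i * ((a i)⁻¹ * γ i) := rfl
  rw [hlhs, hrhs1, hrhs2, hinner]
  set S := ∑ j, γ j * ((a j)⁻¹ * γ j) with hSd
  set R := ∑ j, p j * ((a j)⁻¹ * γ j) with hRd
  set W := ∑ j, γ j * (a j * p j) with hWd
  field_simp [hD.ne', hs]
  ring
end

section
/- Consider the constrained Hamiltonian system on ℝ²ⁿ with H(γ,p̃) = ½(D(γ,A⁻¹γ)(p̃,p̃) - (p̃,Ap̃)) and constraints (γ,γ) = 1, (γ,p̃) = 0. The Lagrange multipliers λ, μ making the flow γ' = ∂H/∂p̃ - μγ, p̃' = -∂H/∂γ + 2λγ + μp̃ preserve both constraints are uniquely λ = (Ap̃,p̃)/(2(γ,γ)) and μ = (D(γ,A⁻¹γ)(p̃,γ) - (Ap̃,γ))/(γ,γ). The resulting equations are γ' = D(A⁻¹γ,γ)p̃ - Ap̃ + ((γ,Ap̃)/(γ,γ))γ - (D(γ,A⁻¹γ)(p̃,γ)/(γ,γ))γ and p̃' = -D(p̃,p̃)A⁻¹γ + ((p̃,Ap̃)/(γ,γ))γ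 - ((γ,Ap̃)/(γ,γ))p̃ + (D(γ,A⁻¹γ)(p̃,γ)/(γ,γ))p̃, and these preserve (γ,γ) and (γ,p̃). -/
open Matrix

theorem stmt10 {n : ℕ} (hn : 2 ≤ n) (a : Fin n → ℝ) (ha : ∀ i, 0 < a i)
    (D : ℝ) (hD : 0 < D) (γ pt : Fin n → ℝ) (hγ : γ ≠ 0) :
    letI Ainvγ : Fin n → ℝ := fun i => (a i)⁻¹ * γ i
    letI Apt : Fin n → ℝ := fun i => a i * pt i
    -- the flow with multipliers λ, μ : γ' = ∂H/∂p̃ - μγ, p̃' = -∂H/∂γ + 2λγ + μp̃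
    letI γ' : ℝ → ℝ → (Fin n → ℝ) := fun _lam mu =>
      (D * (γ ⬝ᵥ Ainvγ)) • pt - Apt - mu • γ
    letI p' : ℝ → ℝ → (Fin n → ℝ) := fun lam mu =>
      -(D * (pt ⬝ᵥ pt)) • Ainvγ + (2 * lam) • γ + mu • pt
    letI lam0 : ℝ := (Apt ⬝ᵥ pt) / (2 * (γ ⬝ᵥ γ))
    letI mu0 : ℝ := (D * (γ ⬝ᵥ Ainvγ) * (pt ⬝ᵥ γ) - (Apt ⬝ᵥ γ)) / (γ ⬝ᵥ γ)
    -- uniqueness of the multipliers preserving both constraints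
    (∀ lam mu : ℝ,
      (γ ⬝ᵥ γ' lam mu = 0 ∧ γ' lam mu ⬝ᵥ pt + γ ⬝ᵥ p' lam mu = 0) ↔
        (lam = lam0 ∧ mu = mu0)) ∧
    -- the resulting equations
    γ' lam0 mu0 =
      (D * (γ ⬝ᵥ Ainvγ)) • pt - Apt + ((γ ⬝ᵥ Apt) / (γ ⬝ᵥ γ)) • γ
        - (D * (γ ⬝ᵥ Ainvγ) * (pt ⬝ᵥ γ) / (γ ⬝ᵥ γ)) • γ ∧
    p' lam0 mu0 =
      -(D * (pt ⬝ᵥ pt)) • Ainvγ + ((pt ⬝ᵥ Apt) / (γ ⬝ᵥ γ)) • γ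
        - ((γ ⬝ᵥ Apt) / (γ ⬝ᵥ γ)) • pt
        + (D * (γ ⬝ᵥ Ainvγ) * (pt ⬝ᵥ γ) / (γ ⬝ᵥ γ)) • pt ∧
    -- these preserve (γ,γ) and (γ,p̃)
    γ ⬝ᵥ γ' lam0 mu0 = 0 ∧ γ' lam0 mu0 ⬝ᵥ pt + γ ⬝ᵥ p' lam0 mu0 = 0 := by
  have hg : (γ ⬝ᵥ γ) ≠ 0 := by simpa using hγ
  set Ainvγ : Fin n → ℝ := fun i => (a i)⁻¹ * γ i with hAidef
  set Apt : Fin n → ℝ := fun i => a i * pt i with hAptdef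
  beta_reduce
  have hAg : Apt ⬝ᵥ γ = γ ⬝ᵥ Apt := dotProduct_comm _ _
  have hpg : pt ⬝ᵥ γ = γ ⬝ᵥ pt := dotProduct_comm _ _
  have hAp : Apt ⬝ᵥ pt = pt ⬝ᵥ Apt := dotProduct_comm _ _
  have hig : Ainvγ ⬝ᵥ γ = γ ⬝ᵥ Ainvγ := dotProduct_comm _ _
  have hip : Ainvγ ⬝ᵥ pt = pt ⬝ᵥ Ainvγ := dotProduct_comm _ _
  simp only [dotProduct_sub, dotProduct_add, dotProduct_smul, smul_dotProduct,
    sub_dotProduct, add_dotProduct, neg_dotProduct, dotProduct_neg, smul_eq_mul,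
    hAg, hpg, hAp, hig, hip]
  refine ⟨fun lam mu => ?_, ?_, ?_, ?_, ?_⟩
  · constructor
    · rintro ⟨h1, h2⟩
      constructor
      · field_simp
        linear_combination h2
      · field_simp
        linear_combination -h1
    · rintro ⟨rfl, rfl⟩
      constructor <;> field_simp <;> ring
  · funext i
    simp only [Pi.sub_apply, Pi.add_apply, Pi.neg_apply, Pi.smul_apply, smul_eq_mul]
    field_simp
    ring
  · funext i
    simp only [Pi.sub_apply, Pi.add_apply, Pi.neg_apply, Pi.smul_apply, smul_eq_mul]
    field_simp
    ring
  · field_simp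
    try ring
  · field_simp
    try ring
end

section
/- Along the constrained geodesic flow γ' = D(A⁻¹γ,γ)p̃ - Ap̃ + ((γ,Ap̃))γ - D(γ,A⁻¹γ)(p̃,γ)γ, p̃' = -D(p̃,p̃)A⁻¹γ + ((p̃,Ap̃))γ - ((γ,Ap̃))p̃ + D(γ,A⁻¹γ)(p̃,γ)p̃ restricted to the set {(γ,γ)=1, (γ,p̃)=0}, the three functions H = ½(D(γ,A⁻¹γ)(p̃,p̃) - (p̃,Ap̃)), K = D²(A⁻¹γ,γ)(p̃,p̃), and ℋ = (D²/2)(Ap̃,p̃) are first integrals, and they satisfy the linear relation H = K/(2D) - ℋ/D². -/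
open Matrix

lemma hasDerivAt_dot {n : ℕ} {f g : ℝ → Fin n → ℝ} {df dg : Fin n → ℝ} {t : ℝ}
    (hf : ∀ i, HasDerivAt (fun s => f s i) (df i) t)
    (hg : ∀ i, HasDerivAt (fun s => g s i) (dg i) t) :
    HasDerivAt (fun s => f s ⬝ᵥ g s) (df ⬝ᵥ g t + f t ⬝ᵥ dg) t := by
  have h : HasDerivAt (fun s => ∑ i, f s i * g s i)
      (∑ i, (df i * g t i + f t i * dg i)) t :=
    HasDerivAt.fun_sum fun i _ => (hf i).mul (hg i)
  simpa [dotProduct, Finset.sum_add_distrib] using h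

lemma dot_flip {n : ℕ} (c u v : Fin n → ℝ) :
    u ⬝ᵥ (fun i => c i * v i) = v ⬝ᵥ (fun i => c i * u i) := by
  simp only [dotProduct]
  exact Finset.sum_congr rfl fun i _ => by ring

lemma dot_cancel {n : ℕ} {a : Fin n → ℝ} (ha : ∀ i, a i ≠ 0) (u v : Fin n → ℝ) :
    (fun i => a i * u i) ⬝ᵥ (fun i => (a i)⁻¹ * v i) = u ⬝ᵥ v := by
  simp only [dotProduct]
  refine Finset.sum_congr rfl fun i _ => ?_
  rw [show a i * u i * ((a i)⁻¹ * v i) = (a i * (a i)⁻¹) * (u i * v i) by ring,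
    mul_inv_cancel₀ (ha i), one_mul]

lemma dot_cancel' {n : ℕ} {a : Fin n → ℝ} (ha : ∀ i, a i ≠ 0) (u v : Fin n → ℝ) :
    (fun i => (a i)⁻¹ * u i) ⬝ᵥ (fun i => a i * v i) = u ⬝ᵥ v := by
  simp only [dotProduct]
  refine Finset.sum_congr rfl fun i _ => ?_
  rw [show (a i)⁻¹ * u i * (a i * v i) = (a i * (a i)⁻¹) * (u i * v i) by ring,
    mul_inv_cancel₀ (ha i), one_mul]


/-- γ-component of the constrained geodesic flow (on the set (γ,γ)=1, (γ,p̃)=0). -/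
noncomputable def Yg {n : ℕ} (a : Fin n → ℝ) (D : ℝ) (γ pt : Fin n → ℝ) : Fin n → ℝ :=
  let Ainvγ : Fin n → ℝ := fun i => (a i)⁻¹ * γ i
  let Apt : Fin n → ℝ := fun i => a i * pt i
  (D * (Ainvγ ⬝ᵥ γ)) • pt - Apt + (γ ⬝ᵥ Apt) • γ - (D * (γ ⬝ᵥ Ainvγ) * (pt ⬝ᵥ γ)) • γ

/-- p̃-component of the constrained geodesic flow. -/
noncomputable def Yp {n : ℕ} (a : Fin n → ℝ) (D : ℝ) (γ pt : Fin n → ℝ) : Fin n → ℝ :=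
  let Ainvγ : Fin n → ℝ := fun i => (a i)⁻¹ * γ i
  let Apt : Fin n → ℝ := (fun i => a i * pt i)
  (-(D * (pt ⬝ᵥ pt))) • Ainvγ + (pt ⬝ᵥ Apt) • γ - (γ ⬝ᵥ Apt) • pt
    + (D * (γ ⬝ᵥ Ainvγ) * (pt ⬝ᵥ γ)) • pt

noncomputable def Hfun {n : ℕ} (a : Fin n → ℝ) (D : ℝ) (γ pt : Fin n → ℝ) : ℝ :=
  (1 / 2) * (D * (γ ⬝ᵥ fun i => (a i)⁻¹ * γ i) * (pt ⬝ᵥ pt) - (pt ⬝ᵥ fun i => a i * pt i))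

noncomputable def Kfun {n : ℕ} (a : Fin n → ℝ) (D : ℝ) (γ pt : Fin n → ℝ) : ℝ :=
  D ^ 2 * ((fun i => (a i)⁻¹ * γ i) ⬝ᵥ γ) * (pt ⬝ᵥ pt)

noncomputable def calH {n : ℕ} (a : Fin n → ℝ) (D : ℝ) (pt : Fin n → ℝ) : ℝ :=
  (D ^ 2 / 2) * ((fun i => a i * pt i) ⬝ᵥ pt)

theorem stmt11 {n : ℕ} (hn : 2 ≤ n) (a : Fin n → ℝ) (ha : ∀ i, 0 < a i)
    (D : ℝ) (hD : 0 < D) (γ pt : ℝ → Fin n → ℝ)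
    (hγγ : ∀ t, γ t ⬝ᵥ γ t = 1) (hγp : ∀ t, γ t ⬝ᵥ pt t = 0)
    (hγ : ∀ t i, HasDerivAt (fun s => γ s i) (Yg a D (γ t) (pt t) i) t)
    (hp : ∀ t i, HasDerivAt (fun s => pt s i) (Yp a D (γ t) (pt t) i) t) :
    (∀ t, HasDerivAt (fun s => Hfun a D (γ s) (pt s)) 0 t) ∧
    (∀ t, HasDerivAt (fun s => Kfun a D (γ s) (pt s)) 0 t) ∧
    (∀ t, HasDerivAt (fun s => calH a D (pt s)) 0 t) ∧
    (∀ g q : Fin n → ℝ, g ⬝ᵥ g = 1 → g ⬝ᵥ q = 0 →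
      Hfun a D g q = Kfun a D g q / (2 * D) - calH a D q / D ^ 2) := by
  have ha' : ∀ i, a i ≠ 0 := fun i => (ha i).ne'
  -- derivatives of basic scalar quantities
  have hα : ∀ t, HasDerivAt (fun s => γ s ⬝ᵥ (fun i => (a i)⁻¹ * γ s i))
      (2 * (Yg a D (γ t) (pt t) ⬝ᵥ (fun i => (a i)⁻¹ * γ t i))) t := by
    intro t
    have h := hasDerivAt_dot (f := γ) (g := fun s i => (a i)⁻¹ * γ s i)
      (df := Yg a D (γ t) (pt t)) (dg := fun i => (a i)⁻¹ * Yg a D (γ t) (pt t) i)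
      (hγ t) (fun i => (hγ t i).const_mul ((a i)⁻¹))
    convert h using 1
    rw [dot_flip (fun i => (a i)⁻¹) (γ t) (Yg a D (γ t) (pt t))]
    ring
  have hβ : ∀ t, HasDerivAt (fun s => pt s ⬝ᵥ pt s)
      (2 * (Yp a D (γ t) (pt t) ⬝ᵥ pt t)) t := by
    intro t
    have h := hasDerivAt_dot (f := pt) (g := pt)
      (df := Yp a D (γ t) (pt t)) (dg := Yp a D (γ t) (pt t)) (hp t) (hp t)
    convert h using 1
    rw [dotProduct_comm (pt t) (Yp a D (γ t) (pt t))]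
    ring
  have hν : ∀ t, HasDerivAt (fun s => pt s ⬝ᵥ (fun i => a i * pt s i))
      (2 * (Yp a D (γ t) (pt t) ⬝ᵥ (fun i => a i * pt t i))) t := by
    intro t
    have h := hasDerivAt_dot (f := pt) (g := fun s i => a i * pt s i)
      (df := Yp a D (γ t) (pt t)) (dg := fun i => a i * Yp a D (γ t) (pt t) i)
      (hp t) (fun i => (hp t i).const_mul (a i))
    convert h using 1
    rw [dot_flip a (pt t) (Yp a D (γ t) (pt t))]
    ring
  -- key scalar identities
  have S1 : ∀ t, Yg a D (γ t) (pt t) ⬝ᵥ (fun i => (a i)⁻¹ * γ t i) =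
      D * (γ t ⬝ᵥ (fun i => (a i)⁻¹ * γ t i)) * (pt t ⬝ᵥ (fun i => (a i)⁻¹ * γ t i))
        + (γ t ⬝ᵥ (fun i => a i * pt t i)) * (γ t ⬝ᵥ (fun i => (a i)⁻¹ * γ t i)) := by
    intro t
    simp only [Yg, sub_dotProduct, add_dotProduct, smul_dotProduct, smul_eq_mul]
    rw [dot_cancel ha' (pt t) (γ t), dotProduct_comm (pt t) (γ t), hγp t,
      dotProduct_comm (fun i => (a i)⁻¹ * γ t i) (γ t)]
    ring
  have S2 : ∀ t, Yp a D (γ t) (pt t) ⬝ᵥ pt t =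
      -(D * (pt t ⬝ᵥ pt t) * (pt t ⬝ᵥ (fun i => (a i)⁻¹ * γ t i)))
        - (γ t ⬝ᵥ (fun i => a i * pt t i)) * (pt t ⬝ᵥ pt t) := by
    intro t
    simp only [Yp, sub_dotProduct, add_dotProduct, smul_dotProduct, smul_eq_mul]
    rw [dotProduct_comm (fun i => (a i)⁻¹ * γ t i) (pt t), hγp t,
      dotProduct_comm (pt t) (γ t), hγp t]
    ring
  have S3 : ∀ t, Yp a D (γ t) (pt t) ⬝ᵥ (fun i => a i * pt t i) = 0 := by
    intro t
    simp only [Yp, sub_dotProduct, add_dotProduct, smul_dotProduct, smul_eq_mul]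
    rw [dot_cancel' ha' (γ t) (pt t), hγp t,
      dotProduct_comm (pt t) (γ t), hγp t,
      dot_flip a (γ t) (pt t), dot_flip a (pt t) (pt t)]
    ring
  have hα' : ∀ t, HasDerivAt (fun s => (fun i => (a i)⁻¹ * γ s i) ⬝ᵥ γ s)
      (2 * (Yg a D (γ t) (pt t) ⬝ᵥ (fun i => (a i)⁻¹ * γ t i))) t := by
    intro t
    have h := hasDerivAt_dot (f := fun s i => (a i)⁻¹ * γ s i) (g := γ)
      (df := fun i => (a i)⁻¹ * Yg a D (γ t) (pt t) i) (dg := Yg a D (γ t) (pt t))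
      (fun i => (hγ t i).const_mul ((a i)⁻¹)) (hγ t)
    convert h using 1
    rw [dotProduct_comm (fun i => (a i)⁻¹ * Yg a D (γ t) (pt t) i) (γ t),
      dot_flip (fun i => (a i)⁻¹) (γ t) (Yg a D (γ t) (pt t)),
      dotProduct_comm (fun i => (a i)⁻¹ * γ t i) (Yg a D (γ t) (pt t))]
    ring
  have hcalH : ∀ t, HasDerivAt (fun s => calH a D (pt s)) 0 t := by
    intro t
    have h := (hasDerivAt_dot (f := fun s i => a i * pt s i) (g := pt)
      (df := fun i => a i * Yp a D (γ t) (pt t) i) (dg := Yp a D (γ t) (pt t))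
      (fun i => (hp t i).const_mul (a i)) (hp t)).const_mul (D ^ 2 / 2)
    simp only [calH]
    refine h.congr_deriv ?_
    rw [dotProduct_comm (fun i => a i * Yp a D (γ t) (pt t) i) (pt t),
      dot_flip a (pt t) (Yp a D (γ t) (pt t)),
      dotProduct_comm (fun i => a i * pt t i) (Yp a D (γ t) (pt t)), S3 t]
    ring
  refine ⟨?_, ?_, hcalH, ?_⟩
  · intro t
    have h := ((((hα t).const_mul D).mul (hβ t)).sub (hν t)).const_mul ((1 : ℝ) / 2)
    simp only [Hfun]
    refine h.congr_deriv ?_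
    rw [S1 t, S2 t, S3 t]
    ring
  · intro t
    have h := ((hα' t).const_mul (D ^ 2)).mul (hβ t)
    simp only [Kfun]
    refine h.congr_deriv ?_
    rw [S1 t, S2 t, dotProduct_comm (fun i => (a i)⁻¹ * γ t i) (γ t)]
    ring
  · intro g q hg hq
    simp only [Hfun, Kfun, calH]
    rw [dotProduct_comm (fun i => (a i)⁻¹ * g i) g, dotProduct_comm (fun i => a i * q i) q]
    field_simp
end

section
/- For n = 3, define I₁ = a₂a₃D/(D-a₂a₃), I₂ = a₃a₁D/(D-a₃a₁), I₃ = a₁a₂D/(D-a₁a₂) where 0 < aᵢaⱼ < D. Then the map (a₁,a₂,a₃) ↦ (I₁,I₂,I₃) is inverted by aᵢ = √(I₁I₂I₃D)·(Iᵢ + D)/(Iᵢ√((I₁+D)(I₂+D)(I₃+D))) for i = 1,2,3. -/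
theorem stmt13 (a₁ a₂ a₃ D : ℝ) (ha₁ : 0 < a₁) (ha₂ : 0 < a₂) (ha₃ : 0 < a₃)
    (hD : 0 < D) (h₁₂ : a₁ * a₂ < D) (h₂₃ : a₂ * a₃ < D) (h₃₁ : a₃ * a₁ < D) :
    letI I₁ : ℝ := a₂ * a₃ * D / (D - a₂ * a₃)
    letI I₂ : ℝ := a₃ * a₁ * D / (D - a₃ * a₁)
    letI I₃ : ℝ := a₁ * a₂ * D / (D - a₁ * a₂)
    a₁ = Real.sqrt (I₁ * I₂ * I₃ * D) * (I₁ + D) /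
          (I₁ * Real.sqrt ((I₁ + D) * (I₂ + D) * (I₃ + D))) ∧
    a₂ = Real.sqrt (I₁ * I₂ * I₃ * D) * (I₂ + D) /
          (I₂ * Real.sqrt ((I₁ + D) * (I₂ + D) * (I₃ + D))) ∧
    a₃ = Real.sqrt (I₁ * I₂ * I₃ * D) * (I₃ + D) /
          (I₃ * Real.sqrt ((I₁ + D) * (I₂ + D) * (I₃ + D))) := by
  have hd1 : 0 < D - a₂ * a₃ := by linarith
  have hd2 : 0 < D - a₃ * a₁ := by linarith
  have hd3 : 0 < D - a₁ * a₂ := by linarith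
  set I₁ := a₂ * a₃ * D / (D - a₂ * a₃) with hI1def
  set I₂ := a₃ * a₁ * D / (D - a₃ * a₁) with hI2def
  set I₃ := a₁ * a₂ * D / (D - a₁ * a₂) with hI3def
  have hI1 : 0 < I₁ := by positivity
  have hI2 : 0 < I₂ := by positivity
  have hI3 : 0 < I₃ := by positivity
  have hs : (0:ℝ) < Real.sqrt ((D - a₂ * a₃) * (D - a₃ * a₁) * (D - a₁ * a₂)) :=
    Real.sqrt_pos.2 (by positivity)
  set s := Real.sqrt ((D - a₂ * a₃) * (D - a₃ * a₁) * (D - a₁ * a₂)) with hsdef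
  have hs2 : s ^ 2 = (D - a₂ * a₃) * (D - a₃ * a₁) * (D - a₁ * a₂) :=
    Real.sq_sqrt (by positivity)
  have e1 : Real.sqrt (I₁ * I₂ * I₃ * D) = a₁ * a₂ * a₃ * D ^ 2 / s := by
    have harg : I₁ * I₂ * I₃ * D = (a₁ * a₂ * a₃ * D ^ 2 / s) ^ 2 := by
      show a₂ * a₃ * D / (D - a₂ * a₃) * (a₃ * a₁ * D / (D - a₃ * a₁)) *
        (a₁ * a₂ * D / (D - a₁ * a₂)) * D = _
      rw [div_pow, hs2]
      field_simp
    rw [harg, Real.sqrt_sq (by positivity)]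
  have eb1 : I₁ + D = D ^ 2 / (D - a₂ * a₃) := by
    show a₂ * a₃ * D / (D - a₂ * a₃) + D = _
    field_simp; ring
  have eb2 : I₂ + D = D ^ 2 / (D - a₃ * a₁) := by
    show a₃ * a₁ * D / (D - a₃ * a₁) + D = _
    field_simp; ring
  have eb3 : I₃ + D = D ^ 2 / (D - a₁ * a₂) := by
    show a₁ * a₂ * D / (D - a₁ * a₂) + D = _
    field_simp; ring
  have e2 : Real.sqrt ((I₁ + D) * (I₂ + D) * (I₃ + D)) = D ^ 3 / s := by
    have harg : (I₁ + D) * (I₂ + D) * (I₃ + D) = (D ^ 3 / s) ^ 2 := by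
      rw [eb1, eb2, eb3, div_pow, hs2]
      field_simp
    rw [harg, Real.sqrt_sq (by positivity)]
  refine ⟨?_, ?_, ?_⟩
  · rw [e1, e2, eb1]
    show a₁ = _ / (a₂ * a₃ * D / (D - a₂ * a₃) * _)
    field_simp
  · rw [e1, e2, eb2]
    show a₂ = _ / (a₃ * a₁ * D / (D - a₃ * a₁) * _)
    field_simp
    ring_nf
    have hx : D - a₁ * a₃ ≠ 0 := by linarith [mul_comm a₁ a₃]
    field_simp
  · rw [e1, e2, eb3]
    show a₃ = _ / (a₁ * a₂ * D / (D - a₁ * a₂) * _)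
    field_simp
end

section
/- Homogeneous ball: suppose I = s·Id (s > 0) on skew-symmetric matrices, and let γ, p satisfy (γ,γ) = 1, (γ,p) = 0. Then the solution ξ of p = ξ - D·I⁻¹(γ∧ξ)γ with (γ,ξ) = 0 is ξ = s·p/(s+D), and the reduced equations γ̇ = -I⁻¹(γ∧ξ)γ, ṗ = -I⁻¹(γ∧ξ)p take the form γ̇ = p/(s+D), ṗ = -((p,p)/(s+D))γ. Moreover along this flow the matrix ω = (γ∧p)/(s+D) is constant: dω/dt = 0. -/
open Matrix

theorem stmt15 {n : ℕ} (hn : 2 ≤ n) (s D : ℝ) (hs : 0 < s) (hD : 0 < D)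
    (γ p ξ : ℝ → Fin n → ℝ)
    (hγγ : ∀ t, γ t ⬝ᵥ γ t = 1) (hγp : ∀ t, γ t ⬝ᵥ p t = 0)
    -- ξ solves p = ξ - D·I⁻¹(γ∧ξ)γ with (γ,ξ) = 0, where I⁻¹ = (1/s)·Id
    (hξ : ∀ t, γ t ⬝ᵥ ξ t = 0)
    (hpξ : ∀ t, p t = ξ t - D • ((1 / s) • wedge (γ t) (ξ t)).mulVec (γ t))
    -- reduced equations γ̇ = -I⁻¹(γ∧ξ)γ, ṗ = -I⁻¹(γ∧ξ)p
    (hγd : ∀ t i, HasDerivAt (fun τ => γ τ i)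
      (-((1 / s) • wedge (γ t) (ξ t)).mulVec (γ t) i) t)
    (hpd : ∀ t i, HasDerivAt (fun τ => p τ i)
      (-((1 / s) • wedge (γ t) (ξ t)).mulVec (p t) i) t) :
    -- ξ = s·p/(s+D)
    (∀ t, ξ t = (s / (s + D)) • p t) ∧
    -- the equations take the form γ̇ = p/(s+D), ṗ = -((p,p)/(s+D))γ
    (∀ t, (-((1 / s) • wedge (γ t) (ξ t)).mulVec (γ t)) = (1 / (s + D)) • p t) ∧
    (∀ t, (-((1 / s) • wedge (γ t) (ξ t)).mulVec (p t)) =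
      (-(p t ⬝ᵥ p t) / (s + D)) • γ t) ∧
    -- ω = (γ∧p)/(s+D) is constant along the flow
    (∀ t i j, HasDerivAt (fun τ => ((1 / (s + D)) • wedge (γ τ) (p τ)) i j) 0 t) := by
  have hs0 : s ≠ 0 := ne_of_gt hs
  have hsD : s + D ≠ 0 := ne_of_gt (by linarith)
  -- key: wedge γ ξ *ᵥ γ = -ξ
  have hw : ∀ t, ((1 / s) • wedge (γ t) (ξ t)).mulVec (γ t) = (-(1/s)) • ξ t := by
    intro t
    rw [smul_mulVec, wedge_mulVec, dotProduct_comm (ξ t) (γ t), hξ t, hγγ t]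
    funext i; simp
  have hp : ∀ t, p t = ((s + D)/s) • ξ t := by
    intro t
    rw [hpξ t, hw t]
    funext i; simp; field_simp
  have hξp : ∀ t, ξ t = (s / (s + D)) • p t := by
    intro t
    rw [hp t, smul_smul]
    field_simp
    exact (one_smul ℝ _).symm
  have hγeq : ∀ t, (-((1 / s) • wedge (γ t) (ξ t)).mulVec (γ t)) = (1 / (s + D)) • p t := by
    intro t
    rw [hw t, hξp t]
    funext i; simp; field_simp
  have hξpdot : ∀ t, ξ t ⬝ᵥ p t = (s / (s+D)) * (p t ⬝ᵥ p t) := by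
    intro t; rw [hξp t, smul_dotProduct, smul_eq_mul]
  have hpeq : ∀ t, (-((1 / s) • wedge (γ t) (ξ t)).mulVec (p t)) =
      (-(p t ⬝ᵥ p t) / (s + D)) • γ t := by
    intro t
    rw [smul_mulVec, wedge_mulVec, hξpdot t, hγp t]
    funext i; simp; field_simp
  refine ⟨hξp, hγeq, hpeq, ?_⟩
  intro t i j
  have hγd' : ∀ k, HasDerivAt (fun τ => γ τ k) ((1 / (s + D)) * p t k) t := by
    intro k
    have := hγd t k
    rwa [show (-((1 / s) • wedge (γ t) (ξ t)).mulVec (γ t) k) = (1/(s+D)) * p t k from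
      by rw [show (-((1 / s) • wedge (γ t) (ξ t)).mulVec (γ t) k)
          = (-((1 / s) • wedge (γ t) (ξ t)).mulVec (γ t)) k from rfl, hγeq t]; simp] at this
  have hpd' : ∀ k, HasDerivAt (fun τ => p τ k) ((-(p t ⬝ᵥ p t) / (s + D)) * γ t k) t := by
    intro k
    have := hpd t k
    rwa [show (-((1 / s) • wedge (γ t) (ξ t)).mulVec (p t) k)
          = (-(p t ⬝ᵥ p t) / (s + D)) * γ t k from
      by rw [show (-((1 / s) • wedge (γ t) (ξ t)).mulVec (p t) k)
          = (-((1 / s) • wedge (γ t) (ξ t)).mulVec (p t)) k from rfl, hpeq t]; simp] at this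
  have h1 : HasDerivAt (fun τ => (1/(s+D)) * (γ τ i * p τ j - γ τ j * p τ i))
      ((1/(s+D)) * (((1 / (s + D)) * p t i) * p t j + γ t i * ((-(p t ⬝ᵥ p t) / (s + D)) * γ t j)
        - (((1 / (s + D)) * p t j) * p t i + γ t j * ((-(p t ⬝ᵥ p t) / (s + D)) * γ t i)))) t :=
    (((hγd' i).mul (hpd' j)).sub ((hγd' j).mul (hpd' i))).const_mul _
  have heq : (fun τ => ((1 / (s + D)) • wedge (γ τ) (p τ)) i j)
      = (fun τ => (1/(s+D)) * (γ τ i * p τ j - γ τ j * p τ i)) := by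
    funext τ
    simp only [Matrix.smul_apply, wedge, Matrix.sub_apply, vecMulVec_apply, smul_eq_mul]
    ring
  rw [heq]
  convert h1 using 1
  ring
end
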